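/- For any w \in Sym_n, the number of w-fixed cosets in (\mathbb{Z}/2\mathbb{Z})^n / \langle(1,...,1)\rangle under the coordinate-permutation action equals the number of w-stable subsets of \{1,...,n\} of even cardinality. -/

import Mathlib

open scoped Classical

/-- The diagonal subgroup of `(ℤ/2ℤ)^n` generated by `(1,1,…,1)`. -/
def diagSubgroup (n : ℕ) : AddSubgroup (Fin n → ZMod 2) :=
  AddSubgroup.closure {fun _ => 1}

/-- The coordinate-permutation action of `w ∈ Sym_n` on `(ℤ/2ℤ)^n`. -/
def permCoordHom {n : ℕ} (w : Equiv.Perm (Fin n)) :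
    (Fin n → ZMod 2) →+ (Fin n → ZMod 2) :=
  AddMonoidHom.mk' (fun a => a ∘ ⇑w⁻¹) (fun _ _ => rfl)

/-- The induced action of `w` on the quotient `(ℤ/2ℤ)^n / ⟨(1,…,1)⟩`. -/
def permQuotHom {n : ℕ} (w : Equiv.Perm (Fin n)) :
    (Fin n → ZMod 2) ⧸ diagSubgroup n →+ (Fin n → ZMod 2) ⧸ diagSubgroup n :=
  QuotientAddGroup.map _ _ (permCoordHom w) (by
    rw [diagSubgroup, AddSubgroup.closure_le]
    rintro x rfl
    exact AddSubgroup.subset_closure rfl)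

section Aux
variable {n : ℕ}

def phiL (w : Equiv.Perm (Fin n)) : (Fin n → ZMod 2) →ₗ[ZMod 2] (Fin n → ZMod 2) where
  toFun a := a ∘ ⇑w⁻¹ - a
  map_add' a b := by funext i; simp [Function.comp]; ring
  map_smul' c a := by funext i; simp [Function.comp, mul_sub]

def sigL (n : ℕ) : (Fin n → ZMod 2) →ₗ[ZMod 2] ZMod 2 where
  toFun a := ∑ i, a i
  map_add' a b := by simp [Finset.sum_add_distrib]
  map_smul' c a := by simp [Finset.mul_sum]

lemma zmod2_cases (z : ZMod 2) : z = 0 ∨ z = 1 := by revert z; decide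

lemma zmod2_add_one {a z : ZMod 2} (h : a ≠ z) : a + 1 = z := by revert a z; decide

lemma sum_adj (w : Equiv.Perm (Fin n)) (x k : Fin n → ZMod 2) :
    ∑ i, (phiL w x) i * k i = ∑ i, x i * (k (w i) - k i) := by
  have h1 : ∑ i, x (w⁻¹ i) * k i = ∑ i, x i * k (w i) := by
    rw [← Equiv.sum_comp w (fun i => x (w⁻¹ i) * k i)]
    simp
  simp only [phiL, LinearMap.coe_mk, AddHom.coe_mk, Pi.sub_apply, Function.comp_apply,
    sub_mul, mul_sub, Finset.sum_sub_distrib, h1]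

lemma ker_fix {w : Equiv.Perm (Fin n)} {k : Fin n → ZMod 2} (hk : phiL w k = 0) :
    ∀ i, k (w i) = k i := by
  intro i
  have h := congrFun hk (w i)
  simp only [phiL, LinearMap.coe_mk, AddHom.coe_mk, Pi.sub_apply, Function.comp_apply,
    Pi.zero_apply, Equiv.Perm.inv_def, Equiv.symm_apply_apply, sub_eq_zero] at h
  exact h.symm

lemma sig_zero_of_ker (w : Equiv.Perm (Fin n)) (b : Fin n → ZMod 2) (hb : phiL w b = 1)
    {k : Fin n → ZMod 2} (hk : phiL w k = 0) : sigL n k = 0 := by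
  have : sigL n k = ∑ i, (phiL w b) i * k i := by
    rw [hb]; simp [sigL]
  rw [this, sum_adj]
  simp [ker_fix hk]

lemma exists_preimage_one (w : Equiv.Perm (Fin n))
    (h : ∀ k, phiL w k = 0 → sigL n k = 0) : ∃ b, phiL w b = 1 := by
  by_contra hb
  push_neg at hb
  have hmem : (1 : Fin n → ZMod 2) ∉ LinearMap.range (phiL w) := by
    rintro ⟨b, hb'⟩; exact hb b hb'
  obtain ⟨f, hf1, hf0⟩ := Submodule.exists_dual_map_eq_bot_of_notMem hmem inferInstance
  have hker : ∀ x, f (phiL w x) = 0 := by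
    intro x
    have : f (phiL w x) ∈ Submodule.map f (LinearMap.range (phiL w)) :=
      Submodule.mem_map_of_mem ⟨x, rfl⟩
    rw [hf0] at this; exact (Submodule.mem_bot _).mp this
  set k : Fin n → ZMod 2 := fun i => f (fun j => if i = j then 1 else 0) with hkdef
  have hf : ∀ x : Fin n → ZMod 2, f x = ∑ i, x i * k i := by
    intro x; rw [LinearMap.pi_apply_eq_sum_univ f x]; simp [hkdef, smul_eq_mul]
  have hkw : ∀ j, k (w j) = k j := by
    intro j
    have h0 := hker (fun i => if j = i then 1 else 0)
    rw [hf, sum_adj] at h0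
    simp only [ite_mul, one_mul, zero_mul, Finset.sum_ite_eq, Finset.mem_univ, if_true] at h0
    exact sub_eq_zero.mp h0
  have hkker : phiL w k = 0 := by
    funext i
    simp only [phiL, LinearMap.coe_mk, AddHom.coe_mk, Pi.sub_apply, Function.comp_apply,
      Pi.zero_apply, sub_eq_zero]
    have := hkw (w⁻¹ i)
    rw [Equiv.Perm.inv_def, Equiv.apply_symm_apply] at this; exact this.symm
  apply hf1
  rw [hf 1]
  have := h k hkker
  simpa [sigL] using this

lemma mem_diag_iff (x : Fin n → ZMod 2) :
    x ∈ diagSubgroup n ↔ x = 0 ∨ x = 1 := by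
  constructor
  · intro hx
    rw [diagSubgroup, AddSubgroup.mem_closure_singleton] at hx
    obtain ⟨k, rfl⟩ := hx
    rcases zmod2_cases (k : ZMod 2) with h | h
    · left; funext i; simp [zsmul_eq_mul, h]
    · right; funext i; simp [zsmul_eq_mul, h]
  · rintro (rfl | rfl)
    · exact (diagSubgroup n).zero_mem
    · rw [diagSubgroup]
      exact AddSubgroup.subset_closure rfl

lemma fixed_iff (w : Equiv.Perm (Fin n)) (a : Fin n → ZMod 2) :
    permQuotHom w (QuotientAddGroup.mk a) = QuotientAddGroup.mk a ↔
      phiL w a ∈ diagSubgroup n := by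
  rw [permQuotHom, QuotientAddGroup.map_mk, QuotientAddGroup.eq_iff_sub_mem]
  rfl

lemma phi_one (w : Equiv.Perm (Fin n)) : phiL w 1 = 0 := by
  funext i; simp [phiL]

noncomputable def equivFix (w : Equiv.Perm (Fin n)) (hn : 0 < n) :
    {a : Fin n → ZMod 2 // phiL w a ∈ diagSubgroup n} ≃
      {q : (Fin n → ZMod 2) ⧸ diagSubgroup n // permQuotHom w q = q} × ZMod 2 :=
  Equiv.ofBijective
    (fun a => (⟨QuotientAddGroup.mk a.1, (fixed_iff w a.1).mpr a.2⟩, a.1 ⟨0, hn⟩)) (by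
    constructor
    · rintro ⟨a, ha⟩ ⟨b, hb⟩ hab
      simp only [Prod.mk.injEq, Subtype.mk.injEq] at hab
      obtain ⟨h1, h2⟩ := hab
      rw [QuotientAddGroup.eq_iff_sub_mem] at h1
      rcases (mem_diag_iff _).mp h1 with h | h
      · exact Subtype.ext (sub_eq_zero.mp h)
      · exfalso
        have := congrFun h ⟨0, hn⟩
        simp only [Pi.sub_apply, h2, sub_self, Pi.one_apply] at this
        exact zero_ne_one this
    · rintro ⟨⟨q, hq⟩, z⟩
      obtain ⟨a, rfl⟩ := QuotientAddGroup.mk_surjective q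
      have ha : phiL w a ∈ diagSubgroup n := (fixed_iff w a).mp hq
      by_cases hz : a ⟨0, hn⟩ = z
      · exact ⟨⟨a, ha⟩, by simp [hz]⟩
      · refine ⟨⟨a + 1, by rw [map_add, phi_one, add_zero]; exact ha⟩, ?_⟩
        have hmk : (QuotientAddGroup.mk (a + 1) : (Fin n → ZMod 2) ⧸ diagSubgroup n) =
            QuotientAddGroup.mk a := by
          rw [QuotientAddGroup.eq_iff_sub_mem, add_sub_cancel_left]
          exact (mem_diag_iff _).mpr (Or.inr rfl)
        simp only [Prod.mk.injEq, Subtype.mk.injEq]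
        exact ⟨hmk, zmod2_add_one hz⟩)

noncomputable def equivEpos (w : Equiv.Perm (Fin n)) (hn : 0 < n)
    (b : Fin n → ZMod 2) (hb : phiL w b = 1) :
    {a : Fin n → ZMod 2 // phiL w a = 0 ∧ sigL n a = 0} × ZMod 2 ≃
      {a : Fin n → ZMod 2 // phiL w a ∈ diagSubgroup n} :=
  Equiv.ofBijective
    (fun p => ⟨p.1.1 + p.2 • b, by
      rw [map_add, p.1.2.1, zero_add, map_smul, hb]
      rcases zmod2_cases p.2 with h | h <;> rw [h]
      · simpa using (mem_diag_iff (0 : Fin n → ZMod 2)).mpr (Or.inl rfl)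
      · simpa using (mem_diag_iff (1 : Fin n → ZMod 2)).mpr (Or.inr rfl)⟩) (by
    constructor
    · rintro ⟨⟨e, he⟩, z⟩ ⟨⟨e', he'⟩, z'⟩ hee
      simp only [Subtype.mk.injEq] at hee
      have hphi := congrArg (phiL w) hee
      rw [map_add, map_add, he.1, he'.1, zero_add, zero_add, map_smul, map_smul, hb] at hphi
      have hz : z = z' := by
        have := congrFun hphi ⟨0, hn⟩
        simpa using this
      subst hz
      have : e = e' := by
        have := add_right_cancel hee
        exact this
      simp [this]
    · rintro ⟨a, ha⟩
      rcases (mem_diag_iff _).mp ha with h | h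
      · exact ⟨⟨⟨a, h, sig_zero_of_ker w b hb h⟩, 0⟩, by simp⟩
      · refine ⟨⟨⟨a - b, ?_, ?_⟩, 1⟩, ?_⟩
        · rw [map_sub, h, hb, sub_self]
        · refine sig_zero_of_ker w b hb ?_
          rw [map_sub, h, hb, sub_self]
        · simp)

noncomputable def equivEneg (w : Equiv.Perm (Fin n))
    (k0 : Fin n → ZMod 2) (hk0 : phiL w k0 = 0) (hs : sigL n k0 = 1) :
    {a : Fin n → ZMod 2 // phiL w a = 0 ∧ sigL n a = 0} × ZMod 2 ≃
      {a : Fin n → ZMod 2 // phiL w a = 0} :=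
  Equiv.ofBijective
    (fun p => ⟨p.1.1 + p.2 • k0, by rw [map_add, p.1.2.1, zero_add, map_smul, hk0, smul_zero]⟩) (by
    constructor
    · rintro ⟨⟨e, he⟩, z⟩ ⟨⟨e', he'⟩, z'⟩ hee
      simp only [Subtype.mk.injEq] at hee
      have hsig := congrArg (sigL n) hee
      rw [map_add, map_add, he.2, he'.2, zero_add, zero_add, map_smul, map_smul, hs,
        smul_eq_mul, smul_eq_mul, mul_one, mul_one] at hsig
      subst hsig
      have : e = e' := add_right_cancel hee
      simp [this]
    · rintro ⟨a, ha⟩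
      refine ⟨⟨⟨a - (sigL n a) • k0, ?_, ?_⟩, sigL n a⟩, ?_⟩
      · rw [map_sub, ha, map_smul, hk0, smul_zero, sub_self]
      · rw [map_sub, map_smul, hs, smul_eq_mul, mul_one, sub_self]
      · simp)

end Aux
section Fin
variable {n : ℕ}

lemma stable_iff' {w : Equiv.Perm (Fin n)} {A : Finset (Fin n)}
    (h : ∀ i ∈ A, w i ∈ A) : ∀ i, w i ∈ A ↔ i ∈ A := by
  have himg : A.image w = A := by
    apply Finset.eq_of_subset_of_card_le (Finset.image_subset_iff.mpr h)
    rw [Finset.card_image_of_injective _ w.injective]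
  intro i
  constructor
  · intro hwi
    rw [← himg] at hwi
    obtain ⟨x, hx, hxi⟩ := Finset.mem_image.mp hwi
    rwa [← w.injective hxi]
  · exact h i

lemma ind_ker {w : Equiv.Perm (Fin n)} {A : Finset (Fin n)} (hst : ∀ i ∈ A, w i ∈ A) :
    phiL w (fun i => if i ∈ A then (1 : ZMod 2) else 0) = 0 := by
  funext i
  have hiff : (w⁻¹ i ∈ A) ↔ (i ∈ A) := by
    rw [← stable_iff' hst (w⁻¹ i), Equiv.Perm.inv_def, Equiv.apply_symm_apply]
  simp only [phiL, LinearMap.coe_mk, AddHom.coe_mk, Pi.sub_apply, Function.comp_apply,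
    Pi.zero_apply]
  rw [if_congr hiff rfl rfl, sub_self]

lemma ind_sig {A : Finset (Fin n)} (hev : Even A.card) :
    sigL n (fun i => if i ∈ A then (1 : ZMod 2) else 0) = 0 := by
  show (∑ i, if i ∈ A then (1 : ZMod 2) else 0) = 0
  rw [Finset.sum_ite_mem, Finset.univ_inter, Finset.sum_const, nsmul_eq_mul, mul_one,
    ZMod.natCast_eq_zero_iff]
  exact hev.two_dvd

lemma filt_stable {w : Equiv.Perm (Fin n)} {a : Fin n → ZMod 2} (hker : phiL w a = 0) :
    ∀ i ∈ Finset.univ.filter (fun i => a i = 1), w i ∈ Finset.univ.filter (fun i => a i = 1) := by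
  intro i hi
  rw [Finset.mem_filter] at hi ⊢
  exact ⟨Finset.mem_univ _, by rw [ker_fix hker i]; exact hi.2⟩

lemma filt_even {a : Fin n → ZMod 2} (hsig : sigL n a = 0) :
    Even (Finset.univ.filter (fun i => a i = 1)).card := by
  have hsum : (sigL n) a = ((Finset.univ.filter (fun i => a i = 1)).card : ZMod 2) := by
    show (∑ i, a i) = _
    rw [Finset.card_filter, Nat.cast_sum]
    apply Finset.sum_congr rfl
    intro i _
    rcases zmod2_cases (a i) with h | h <;> rw [h]
    · rw [if_neg (show ¬(0 : ZMod 2) = 1 by decide)]; simp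
    · simp
  rw [hsum] at hsig
  have := (ZMod.natCast_eq_zero_iff _ 2).mp hsig
  exact (even_iff_two_dvd).mpr this

noncomputable def equivFinset (w : Equiv.Perm (Fin n)) :
    {A : Finset (Fin n) // (∀ i ∈ A, w i ∈ A) ∧ Even A.card} ≃
      {a : Fin n → ZMod 2 // phiL w a = 0 ∧ sigL n a = 0} where
  toFun A := ⟨fun i => if i ∈ A.1 then 1 else 0, ind_ker A.2.1, ind_sig A.2.2⟩
  invFun a := ⟨Finset.univ.filter (fun i => a.1 i = 1), filt_stable a.2.1, filt_even a.2.2⟩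
  left_inv := by
    rintro ⟨A, hA⟩
    apply Subtype.ext
    dsimp only
    ext i
    simp only [Finset.mem_filter, Finset.mem_univ, true_and]
    by_cases h : i ∈ A
    · simp [h]
    · simp only [h, if_false, iff_false]
      decide
  right_inv := by
    rintro ⟨a, ha⟩
    apply Subtype.ext
    dsimp only
    funext i
    simp only [Finset.mem_filter, Finset.mem_univ, true_and]
    rcases zmod2_cases (a i) with h | h <;> rw [h]
    · rw [if_neg (show ¬(0 : ZMod 2) = 1 by decide)]
    · rw [if_pos rfl]

end Fin

/-- For any `w ∈ Sym_n`, the number of `w`-fixed cosets in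
`(ℤ/2ℤ)^n / ⟨(1,…,1)⟩` under the coordinate-permutation action equals the number of
`w`-stable subsets of `{1,…,n}` of even cardinality. -/
theorem card_fixed_cosets_eq_card_even_stable_subsets {n : ℕ} (w : Equiv.Perm (Fin n)) :
    Nat.card {q : (Fin n → ZMod 2) ⧸ diagSubgroup n // permQuotHom w q = q} =
      (Finset.univ.powerset.filter fun A : Finset (Fin n) =>
        (∀ i ∈ A, w i ∈ A) ∧ Even A.card).card := by
  have hrhs : (Finset.univ.powerset.filter fun A : Finset (Fin n) =>
      (∀ i ∈ A, w i ∈ A) ∧ Even A.card).card =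
      Nat.card {a : Fin n → ZMod 2 // phiL w a = 0 ∧ sigL n a = 0} := by
    rw [Nat.card_congr (equivFinset w).symm, Finset.powerset_univ, Nat.card_eq_fintype_card,
      Fintype.card_subtype]
  rcases Nat.eq_zero_or_pos n with hn | hn
  · subst hn
    haveI : Subsingleton ((Fin 0 → ZMod 2) ⧸ diagSubgroup 0) := by
      constructor
      intro a b
      induction a using QuotientAddGroup.induction_on
      induction b using QuotientAddGroup.induction_on
      congr 1
      exact Subsingleton.elim _ _
    haveI : Nonempty {q : (Fin 0 → ZMod 2) ⧸ diagSubgroup 0 // permQuotHom w q = q} :=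
      ⟨⟨0, map_zero _⟩⟩
    haveI : Nonempty {a : Fin 0 → ZMod 2 // phiL w a = 0 ∧ sigL 0 a = 0} :=
      ⟨⟨0, map_zero _, map_zero _⟩⟩
    rw [hrhs, Nat.card_unique, Nat.card_unique]
  · have h2 : Nat.card {a : Fin n → ZMod 2 // phiL w a ∈ diagSubgroup n}
        = Nat.card {q : (Fin n → ZMod 2) ⧸ diagSubgroup n // permQuotHom w q = q} * 2 := by
      rw [Nat.card_congr (equivFix w hn), Nat.card_prod, Nat.card_zmod]
    have h3 : Nat.card {a : Fin n → ZMod 2 // phiL w a ∈ diagSubgroup n}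
        = Nat.card {a : Fin n → ZMod 2 // phiL w a = 0 ∧ sigL n a = 0} * 2 := by
      by_cases hb : ∃ b, phiL w b = 1
      · obtain ⟨b, hb⟩ := hb
        rw [Nat.card_congr (equivEpos w hn b hb).symm, Nat.card_prod, Nat.card_zmod]
      · push_neg at hb
        have hALL : ∀ a : Fin n → ZMod 2, phiL w a ∈ diagSubgroup n ↔ phiL w a = 0 := by
          intro a
          rw [mem_diag_iff]
          constructor
          · rintro (h | h)
            · exact h
            · exact absurd h (hb a)
          · exact Or.inl
        have hex : ∃ k, phiL w k = 0 ∧ sigL n k ≠ 0 := by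
          by_contra hc
          push_neg at hc
          obtain ⟨b, hb'⟩ := exists_preimage_one w hc
          exact hb b hb'
        obtain ⟨k0, hk0, hs⟩ := hex
        have hs1 : sigL n k0 = 1 := (zmod2_cases _).resolve_left hs
        rw [Nat.card_congr (Equiv.subtypeEquivRight hALL),
          Nat.card_congr (equivEneg w k0 hk0 hs1).symm, Nat.card_prod, Nat.card_zmod]
    rw [hrhs]
    omega
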